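/- Let μ > 1, 0 < α < 1 and c > 0 be real numbers, and let r : ℕ → ℝ be nonnegative with r(0) = 0 and r(n)·n^μ·α^n → c as n → ∞. Define δ₁(n) := ∑_{x=0}^n (n − x + 1)·r(x) and p_n(x) := (n − x + 1)·r(x)/δ₁(n). Then for each fixed natural number a, lim_{n→∞} p_n(n − a) = (a + 1)·(1−α)²·α^a. In particular, if a = α/(1−α) is a natural number, this limit equals (1−α)·α^{α/(1−α)}. -/

import Mathlib

open Filter Real

lemma aux_ratio (μ : ℝ) (j : ℕ) : Tendsto (fun n : ℕ => ((n : ℝ) / ((n : ℝ) - j)) ^ μ) atTop (nhds 1) := by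
  have h0 : Tendsto (fun n : ℕ => (n : ℝ) / ((n : ℝ) - j)) atTop (nhds 1) := by
    have h1 : Tendsto (fun n : ℕ => (j : ℝ) / ((n : ℝ) - j)) atTop (nhds 0) := by
      apply Tendsto.div_atTop tendsto_const_nhds
      exact tendsto_atTop_add_const_right _ _ tendsto_natCast_atTop_atTop
    have h2 := h1.const_add 1
    rw [add_zero] at h2
    apply h2.congr'
    filter_upwards [eventually_gt_atTop j] with n hn
    have : (n : ℝ) - j ≠ 0 := by
      have : (j : ℝ) < n := by exact_mod_cast hn
      intro h; nlinarith
    field_simp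
    ring
  have hc : ContinuousAt (fun x : ℝ => x ^ μ) 1 :=
    Real.continuousAt_rpow_const 1 μ (Or.inl one_ne_zero)
  have := hc.tendsto.comp h0
  simpa [Real.one_rpow, Function.comp_def] using this

lemma aux_shift (μ α c : ℝ) (hμ : 0 < μ) (hα0 : 0 < α) (hα1 : α < 1)
    (r : ℕ → ℝ)
    (hasym : Tendsto (fun n : ℕ => r n * (n : ℝ) ^ μ * α ^ n) atTop (nhds c))
    (j : ℕ) :
    Tendsto (fun n : ℕ => r (n - j) * (n : ℝ) ^ μ * α ^ n) atTop (nhds (c * α ^ j)) := by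
  have h1 : Tendsto (fun n : ℕ => r (n - j) * ((n - j : ℕ) : ℝ) ^ μ * α ^ (n - j))
      atTop (nhds c) := hasym.comp (tendsto_sub_atTop_nat j)
  have h2 := aux_ratio μ j
  have h3 := (h1.mul h2).mul_const (α ^ j)
  rw [mul_one] at h3
  apply h3.congr'
  filter_upwards [eventually_gt_atTop j] with n hn
  have hjn : (j : ℝ) < n := by exact_mod_cast hn
  have hcast : ((n - j : ℕ) : ℝ) = (n : ℝ) - j := by
    rw [Nat.cast_sub hn.le]
  have hpos : (0 : ℝ) < (n : ℝ) - j := by linarith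
  have hnr : (0 : ℝ) ≤ (n : ℝ) := Nat.cast_nonneg n
  have hdiv : ((n : ℝ) / ((n : ℝ) - j)) ^ μ = (n : ℝ) ^ μ / ((n : ℝ) - j) ^ μ :=
    Real.div_rpow hnr hpos.le μ
  have hrne : ((n : ℝ) - j) ^ μ ≠ 0 := (Real.rpow_pos_of_pos hpos μ).ne'
  have hpow : α ^ (n - j) * α ^ j = α ^ n := by
    rw [← pow_add, Nat.sub_add_cancel hn.le]
  rw [hcast, hdiv]
  field_simp
  ring_nf
  rw [← hpow]
  ring

lemma aux_delta (μ α c : ℝ) (hμ : 1 < μ) (hα0 : 0 < α) (hα1 : α < 1)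
    (r : ℕ → ℝ) (hr0 : r 0 = 0) (hrpos : ∀ n, 0 ≤ r n)
    (hasym : Tendsto (fun n : ℕ => r n * (n : ℝ) ^ μ * α ^ n) atTop (nhds c))
    (δ₁ : ℕ → ℝ)
    (hδ₁ : ∀ n, δ₁ n = ∑ x ∈ Finset.range (n + 1), ((n : ℝ) - x + 1) * r x) :
    Tendsto (fun n : ℕ => δ₁ n * (n : ℝ) ^ μ * α ^ n) atTop (nhds (c / (1 - α) ^ 2)) := by
  obtain ⟨K, hK⟩ := hasym.bddAbove_range
  simp only [mem_upperBounds, Set.mem_range, forall_exists_index] at hK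
  have hKb : ∀ m : ℕ, r m * (m : ℝ) ^ μ * α ^ m ≤ K := fun m => hK _ m rfl
  have hK0 : 0 ≤ K := le_trans (by rw [hr0]; simp) (hKb 0)
  set m : ℕ := ⌈μ⌉₊ with hm
  set C : ℝ := K * 2 ^ m with hC
  set bound : ℕ → ℝ := fun j => C * ((j : ℝ) + 1) ^ (m + 1) * α ^ j with hbound
  set F : ℕ → ℕ → ℝ := fun n j =>
    if j ≤ n then ((j : ℝ) + 1) * (r (n - j) * (n : ℝ) ^ μ * α ^ n) else 0 with hF
  -- summability of the bound
  have hαn : ‖α‖ < 1 := by rw [Real.norm_eq_abs, abs_of_pos hα0]; exact hα1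
  have s1 : Summable (fun j : ℕ => (j : ℝ) ^ (m + 1) * α ^ j) :=
    summable_pow_mul_geometric_of_norm_lt_one (m + 1) hαn
  have s2 : Summable (fun j : ℕ => ((j : ℝ) + 1) ^ (m + 1) * α ^ (j + 1)) := by
    have := s1.comp_injective (add_left_injective 1)
    apply this.congr
    intro j
    simp [Function.comp]
  have h_sum : Summable bound := by
    apply (s2.mul_left (C / α)).congr
    intro j
    simp only [hbound]
    have hα' : α ≠ 0 := hα0.ne'
    field_simp
    ring
  -- pointwise limits
  have hab : ∀ j : ℕ, Tendsto (F · j) atTop (nhds (((j : ℝ) + 1) * (c * α ^ j))) := by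
    intro j
    have := (aux_shift μ α c (by linarith) hα0 hα1 r hasym j).const_mul ((j : ℝ) + 1)
    apply this.congr'
    filter_upwards [eventually_ge_atTop j] with n hn
    simp [hF, hn]
  -- the bound
  have h_bound : ∀ n : ℕ, ∀ j : ℕ, ‖F n j‖ ≤ bound j := by
    intro n j
    have hb0 : 0 ≤ bound j := by
      have hCnn : (0:ℝ) ≤ C := mul_nonneg hK0 (by positivity)
      simp only [hbound]
      exact mul_nonneg (mul_nonneg hCnn (by positivity)) (by positivity)
    by_cases hjn : j ≤ n
    · rcases eq_or_lt_of_le hjn with h | h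
      · simp [hF, h.symm, Nat.sub_self, hr0, hb0]
      · -- j < n, q := n - j ≥ 1
        set q : ℕ := n - j with hq
        have hq1 : 1 ≤ q := by omega
        have hqn : q ≤ n := Nat.sub_le n j
        have hqr : (0:ℝ) < q := by exact_mod_cast hq1
        have hFnn : 0 ≤ F n j := by
          simp only [hF, if_pos hjn]
          have hn0' : (0:ℝ) ≤ (n:ℝ) ^ μ := Real.rpow_nonneg (Nat.cast_nonneg n) μ
          exact mul_nonneg (by positivity)
            (mul_nonneg (mul_nonneg (hrpos _) hn0') (pow_pos hα0 n).le)
        rw [Real.norm_eq_abs, abs_of_nonneg hFnn]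
        simp only [hF, if_pos hjn, ← hq]
        -- r q ≤ K / (q^μ α^q)
        have hqpow : (0:ℝ) < (q:ℝ) ^ μ := Real.rpow_pos_of_pos hqr μ
        have hαq : (0:ℝ) < α ^ q := pow_pos hα0 q
        have hrq : r q ≤ K / ((q:ℝ) ^ μ * α ^ q) := by
          rw [le_div_iff₀ (by positivity)]
          calc r q * ((q:ℝ) ^ μ * α ^ q) = r q * (q:ℝ) ^ μ * α ^ q := by ring
          _ ≤ K := hKb q
        have hnq : (n:ℝ) / (q:ℝ) ≤ 2 * j + 2 := by
          rw [div_le_iff₀ hqr]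
          have : n ≤ (2 * j + 2) * q := by
            rcases le_or_gt n (2 * q) with h2 | h2
            · nlinarith
            · have hj2 : n ≤ 2 * j := by omega
              nlinarith
          calc (n:ℝ) ≤ ((2 * j + 2) * q : ℕ) := by exact_mod_cast this
          _ = (2 * (j:ℝ) + 2) * q := by push_cast; ring
        have hstep1 : (n:ℝ) ^ μ ≤ (2 * (j:ℝ) + 2) ^ μ * (q:ℝ) ^ μ := by
          have := Real.rpow_le_rpow (by positivity) hnq (by linarith : (0:ℝ) ≤ μ)
          rw [Real.div_rpow (Nat.cast_nonneg n) hqr.le] at this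
          rw [div_le_iff₀ hqpow] at this
          linarith [this]
        have hstep2 : (2 * (j:ℝ) + 2) ^ μ ≤ (2 * (j:ℝ) + 2) ^ (m:ℝ) := by
          apply Real.rpow_le_rpow_of_exponent_le (by linarith [Nat.cast_nonneg (α := ℝ) j])
          exact_mod_cast Nat.le_ceil μ
        have hstep3 : (2 * (j:ℝ) + 2) ^ (m:ℝ) = 2 ^ m * ((j:ℝ) + 1) ^ m := by
          rw [Real.rpow_natCast]
          rw [show 2 * (j:ℝ) + 2 = 2 * ((j:ℝ) + 1) by ring, mul_pow]
        have hαnq : α ^ n = α ^ q * α ^ j := by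
          rw [← pow_add]
          congr 1
          omega
        calc ((j:ℝ) + 1) * (r q * (n:ℝ) ^ μ * α ^ n)
            ≤ ((j:ℝ) + 1) * (K / ((q:ℝ) ^ μ * α ^ q) * ((2 * (j:ℝ) + 2) ^ μ * (q:ℝ) ^ μ) * α ^ n) := by
              have hn0 : (0:ℝ) ≤ (n:ℝ) ^ μ := Real.rpow_nonneg (Nat.cast_nonneg n) μ
              have h5 : r q * (n:ℝ) ^ μ ≤
                  K / ((q:ℝ) ^ μ * α ^ q) * ((2 * (j:ℝ) + 2) ^ μ * (q:ℝ) ^ μ) :=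
                mul_le_mul hrq hstep1 hn0 (div_nonneg hK0 (by positivity))
              apply mul_le_mul_of_nonneg_left _ (by positivity : (0:ℝ) ≤ (j:ℝ) + 1)
              exact mul_le_mul_of_nonneg_right h5 (pow_pos hα0 n).le
          _ = ((j:ℝ) + 1) * K * (2 * (j:ℝ) + 2) ^ μ * α ^ j := by
              rw [hαnq]; field_simp
          _ ≤ ((j:ℝ) + 1) * K * (2 ^ m * ((j:ℝ) + 1) ^ m) * α ^ j := by
              apply mul_le_mul_of_nonneg_right _ (by positivity)
              rw [← hstep3]
              apply mul_le_mul_of_nonneg_left (hstep2) (by positivity)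
          _ = bound j := by simp only [hbound, hC]; ring
    · simp only [hF, if_neg hjn]
      simpa using hb0
  -- Tannery
  have key := tendsto_tsum_of_dominated_convergence h_sum hab
    (Eventually.of_forall h_bound)
  -- identify the limit sum
  have hgeo : HasSum (fun j : ℕ => ((j : ℝ) + 1) * (c * α ^ j)) (c / (1 - α) ^ 2) := by
    have h1 : HasSum (fun j : ℕ => (j : ℝ) * α ^ j) (α / (1 - α) ^ 2) :=
      hasSum_coe_mul_geometric_of_norm_lt_one hαn
    have h2 : HasSum (fun j : ℕ => α ^ j) (1 - α)⁻¹ := hasSum_geometric_of_lt_one hα0.le hα1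
    have h3 := (h1.add h2).mul_left c
    have heq : ∀ j : ℕ, c * ((j : ℝ) * α ^ j + α ^ j) = ((j : ℝ) + 1) * (c * α ^ j) := by
      intro j; ring
    rw [show c * (α / (1 - α) ^ 2 + (1 - α)⁻¹) = c / (1 - α) ^ 2 by
      have : (1:ℝ) - α ≠ 0 := by linarith
      field_simp; ring] at h3
    exact h3.congr_fun (fun j => (heq j).symm)
  rw [hgeo.tsum_eq] at key
  -- identify the sums
  apply key.congr
  intro n
  have : (∑' j, F n j) = ∑ j ∈ Finset.range (n + 1), F n j := by
    apply tsum_eq_sum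
    intro j hj
    simp only [Finset.mem_range, not_lt] at hj
    simp [hF, if_neg (by omega : ¬ j ≤ n)]
  rw [this, hδ₁ n, Finset.sum_mul, Finset.sum_mul,
    ← Finset.sum_range_reflect (fun x => ((n : ℝ) - x + 1) * r x * (n:ℝ) ^ μ * α ^ n) (n + 1)]
  apply Finset.sum_congr rfl
  intro j hj
  simp only [Finset.mem_range] at hj
  have hjn : j ≤ n := by omega
  simp only [hF, if_pos hjn]
  have h1 : n + 1 - 1 - j = n - j := by omega
  rw [h1]
  have hcast : ((n - j : ℕ) : ℝ) = (n : ℝ) - j := by rw [Nat.cast_sub hjn]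
  rw [hcast]
  ring


/- Eq. (13) (E:peak): for each fixed `a`, the conditional probability that the
unique irreducible substructure has size `n - a` tends to `(a+1)(1-α)²α^a`;
in particular, if `a = α/(1-α)` is a natural number this limit equals
`(1-α)·α^{α/(1-α)}`. -/
theorem stmt_10 (μ α c : ℝ) (hμ : 1 < μ) (hα0 : 0 < α) (hα1 : α < 1) (hc : 0 < c)
    (r : ℕ → ℝ) (hr0 : r 0 = 0) (hrpos : ∀ n, 0 ≤ r n)
    (hasym : Tendsto (fun n : ℕ => r n * (n : ℝ) ^ μ * α ^ n) atTop (nhds c))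
    (δ₁ : ℕ → ℝ)
    (hδ₁ : ∀ n, δ₁ n = ∑ x ∈ Finset.range (n + 1), ((n : ℝ) - x + 1) * r x)
    (p : ℕ → ℕ → ℝ)
    (hp : ∀ n x, p n x = ((n : ℝ) - x + 1) * r x / δ₁ n) :
    (∀ a : ℕ, Tendsto (fun n => p n (n - a)) atTop
        (nhds (((a : ℝ) + 1) * (1 - α) ^ 2 * α ^ a))) ∧
      ∀ a : ℕ, α / (1 - α) = (a : ℝ) →
        Tendsto (fun n => p n (n - a)) atTop
          (nhds ((1 - α) * α ^ (α / (1 - α)))) := by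
  
  have h1α : (1 : ℝ) - α ≠ 0 := by linarith
  have main : ∀ a : ℕ, Tendsto (fun n => p n (n - a)) atTop
      (nhds (((a : ℝ) + 1) * (1 - α) ^ 2 * α ^ a)) := by
    intro a
    have hnum := (aux_shift μ α c (by linarith) hα0 hα1 r hasym a).const_mul ((a : ℝ) + 1)
    have hden := aux_delta μ α c hμ hα0 hα1 r hr0 hrpos hasym δ₁ hδ₁
    have hdenne : c / (1 - α) ^ 2 ≠ 0 := by positivity
    have hdiv := hnum.div hden hdenne
    have heq : (((a : ℝ) + 1) * (c * α ^ a)) / (c / (1 - α) ^ 2)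
        = ((a : ℝ) + 1) * (1 - α) ^ 2 * α ^ a := by
      field_simp
    rw [heq] at hdiv
    apply hdiv.congr'
    filter_upwards [eventually_gt_atTop a] with n hn
    have hjn : (a : ℝ) < n := by exact_mod_cast hn
    have hcast : ((n - a : ℕ) : ℝ) = (n : ℝ) - a := by rw [Nat.cast_sub hn.le]
    have hnpos : (0 : ℝ) < n := by linarith [Nat.cast_nonneg (α := ℝ) a]
    have hne : (n : ℝ) ^ μ * α ^ n ≠ 0 := by
      have := Real.rpow_pos_of_pos hnpos μ
      positivity
    rw [hp n (n - a), hcast]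
    have hco : (n : ℝ) - ((n : ℝ) - a) + 1 = (a : ℝ) + 1 := by ring
    rw [hco]
    rw [show ((a : ℝ) + 1) * r (n - a) / δ₁ n
        = (((a : ℝ) + 1) * r (n - a) * ((n : ℝ) ^ μ * α ^ n)) / (δ₁ n * ((n : ℝ) ^ μ * α ^ n))
      from (mul_div_mul_right _ _ hne).symm]
    simp only [Pi.div_apply]
    congr 1 <;> ring
  refine ⟨main, fun a ha => ?_⟩
  have hval : (1 - α) * α ^ (α / (1 - α)) = ((a : ℝ) + 1) * (1 - α) ^ 2 * α ^ a := by
    rw [ha, Real.rpow_natCast]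
    have hα' : α = (a : ℝ) * (1 - α) := by
      rw [div_eq_iff h1α] at ha
      linarith
    have h1 : ((a : ℝ) + 1) * (1 - α) = 1 := by nlinarith
    calc (1 - α) * α ^ a = (((a : ℝ) + 1) * (1 - α)) * ((1 - α) * α ^ a) := by rw [h1]; ring
    _ = ((a : ℝ) + 1) * (1 - α) ^ 2 * α ^ a := by ring
  rw [hval]
  exact main a
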